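/- Let $A$ be a bialgebra, $\beta$ a unital 2-cocycle for $A$, and $\gamma$ a unital 2-cocycle for the twisted bialgebra $A^\beta$. Then the convolution product $\gamma * \beta$ is a unital 2-cocycle for $A$. -/

import Mathlib

set_option linter.unusedSectionVars false
set_option maxHeartbeats 1000000
set_option synthInstance.maxHeartbeats 400000


open TensorProduct

variable {K A : Type*}

section Defs

variable [CommRing K] [Ring A] [Bialgebra K A]

/-- The comultiplication of the tensor product coalgebra `A ⊗ A`. -/
noncomputable def comul2 : (A ⊗[K] A) →ₗ[K] (A ⊗[K] A) ⊗[K] (A ⊗[K] A) :=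
  (TensorProduct.tensorTensorTensorComm K A A A A).toLinearMap ∘ₗ
    (TensorProduct.map Coalgebra.comul Coalgebra.comul)

/-- The counit of the tensor product coalgebra `A ⊗ A`. -/
noncomputable def counit2 : (A ⊗[K] A) →ₗ[K] K :=
  (TensorProduct.lid K K).toLinearMap ∘ₗ
    (TensorProduct.map Coalgebra.counit Coalgebra.counit)

/-- The comultiplication of the tensor product coalgebra `A ⊗ (A ⊗ A)`. -/
noncomputable def comul3 : (A ⊗[K] (A ⊗[K] A)) →ₗ[K]
    (A ⊗[K] (A ⊗[K] A)) ⊗[K] (A ⊗[K] (A ⊗[K] A)) :=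
  (TensorProduct.tensorTensorTensorComm K A A (A ⊗[K] A) (A ⊗[K] A)).toLinearMap ∘ₗ
    (TensorProduct.map Coalgebra.comul comul2)

/-- Convolution product on linear maps `A ⊗ A → K`. -/
noncomputable def conv2 (f g : (A ⊗[K] A) →ₗ[K] K) : (A ⊗[K] A) →ₗ[K] K :=
  (TensorProduct.lid K K).toLinearMap ∘ₗ (TensorProduct.map f g) ∘ₗ comul2

/-- Convolution product on linear maps `A ⊗ (A ⊗ A) → K`. -/
noncomputable def conv3 (f g : (A ⊗[K] (A ⊗[K] A)) →ₗ[K] K) :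
    (A ⊗[K] (A ⊗[K] A)) →ₗ[K] K :=
  (TensorProduct.lid K K).toLinearMap ∘ₗ (TensorProduct.map f g) ∘ₗ comul3

/-- Convolution product on linear maps `A ⊗ A → A`. -/
noncomputable def conv2A (f g : (A ⊗[K] A) →ₗ[K] A) : (A ⊗[K] A) →ₗ[K] A :=
  (LinearMap.mul' K A) ∘ₗ (TensorProduct.map f g) ∘ₗ comul2

/-- The 2-cocycle equation for `σ`, relative to a multiplication map `m : A ⊗ A → A`
(with the coalgebra structure of `A` fixed):
`σ(y₁ ⊗ z₁) σ(x ⊗ m(y₂ ⊗ z₂)) = σ(x₁ ⊗ y₁) σ(m(x₂ ⊗ y₂) ⊗ z)`, in convolution form. -/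
noncomputable def IsCocycleEq (m : (A ⊗[K] A) →ₗ[K] A) (σ : (A ⊗[K] A) →ₗ[K] K) : Prop :=
  conv3 ((TensorProduct.lid K K).toLinearMap ∘ₗ TensorProduct.map Coalgebra.counit σ)
      (σ ∘ₗ TensorProduct.map LinearMap.id m) =
    conv3 (((TensorProduct.lid K K).toLinearMap ∘ₗ TensorProduct.map σ Coalgebra.counit)
        ∘ₗ (TensorProduct.assoc K A A A).symm.toLinearMap)
      ((σ ∘ₗ TensorProduct.map m LinearMap.id) ∘ₗ
        (TensorProduct.assoc K A A A).symm.toLinearMap)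

/-- The normalization condition `σ(x ⊗ 1) = σ(1 ⊗ x) = ε(x)`. -/
def IsUnital (σ : (A ⊗[K] A) →ₗ[K] K) : Prop :=
  ∀ x : A, σ (x ⊗ₜ[K] (1 : A)) = Coalgebra.counit (R := K) x ∧
    σ ((1 : A) ⊗ₜ[K] x) = Coalgebra.counit (R := K) x

/-- The multiplication `x ·_β y = β(x₁ ⊗ y₁) x₂y₂ β⁻¹(x₃ ⊗ y₃)` of the twisted
bialgebra `A^β`. -/
noncomputable def mulTwist (β βinv : (A ⊗[K] A) →ₗ[K] K) : (A ⊗[K] A) →ₗ[K] A :=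
  conv2A (conv2A ((Algebra.linearMap K A) ∘ₗ β) (LinearMap.mul' K A))
    ((Algebra.linearMap K A) ∘ₗ βinv)

end Defs


open Coalgebra

noncomputable section
namespace ConvAux

variable {K : Type*} [CommRing K]

section TensorCoalg
variable {M N : Type*} [AddCommGroup M] [AddCommGroup N] [Module K M] [Module K N]
  [Coalgebra K M] [Coalgebra K N]

/-- coherence map Φ -/
def phi : (M ⊗[K] (M ⊗[K] M)) ⊗[K] (N ⊗[K] (N ⊗[K] N)) →ₗ[K]
    (M ⊗[K] N) ⊗[K] ((M ⊗[K] N) ⊗[K] (M ⊗[K] N)) :=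
  (TensorProduct.map LinearMap.id (TensorProduct.tensorTensorTensorComm K M M N N).toLinearMap) ∘ₗ
    (TensorProduct.tensorTensorTensorComm K M (M ⊗[K] M) N (N ⊗[K] N)).toLinearMap

@[simp] lemma phi_tmul (a b c : M) (d e f : N) :
    phi (K := K) ((a ⊗ₜ (b ⊗ₜ c)) ⊗ₜ (d ⊗ₜ (e ⊗ₜ f))) = (a ⊗ₜ d) ⊗ₜ ((b ⊗ₜ e) ⊗ₜ (c ⊗ₜ f)) := by
  simp [phi]

lemma phi_aux (a : M) (c : N) (s : M ⊗[K] M) (t : N ⊗[K] N) :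
    (a ⊗ₜ c) ⊗ₜ (TensorProduct.tensorTensorTensorComm K M M N N (s ⊗ₜ t)) =
      phi ((a ⊗ₜ s) ⊗ₜ (c ⊗ₜ t)) := by
  induction s using TensorProduct.induction_on with
  | zero => simp
  | add u v hu hv => simp only [tmul_add, add_tmul, map_add, hu, hv]
  | tmul p q =>
    induction t using TensorProduct.induction_on with
    | zero => simp
    | add u v hu hv => simp only [tmul_add, add_tmul, map_add, hu, hv]
    | tmul r w => simp

lemma assoc_aux (s : M ⊗[K] M) (t : N ⊗[K] N) (b : M) (d : N) :
    TensorProduct.assoc K (M ⊗[K] N) (M ⊗[K] N) (M ⊗[K] N)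
      ((TensorProduct.tensorTensorTensorComm K M M N N (s ⊗ₜ t)) ⊗ₜ (b ⊗ₜ d)) =
      phi ((TensorProduct.assoc K M M M (s ⊗ₜ b)) ⊗ₜ (TensorProduct.assoc K N N N (t ⊗ₜ d))) := by
  induction s using TensorProduct.induction_on with
  | zero => simp
  | add u v hu hv => simp only [tmul_add, add_tmul, map_add, hu, hv]
  | tmul p q =>
    induction t using TensorProduct.induction_on with
    | zero => simp
    | add u v hu hv => simp only [tmul_add, add_tmul, map_add, hu, hv]
    | tmul r w => simp

lemma comul_tmul_tensor (x : M) (y : N) :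
    CoalgebraStruct.comul (R := K) (A := M ⊗[K] N) (x ⊗ₜ y) =
      TensorProduct.tensorTensorTensorComm K M M N N (comul x ⊗ₜ comul y) := rfl

lemma counit_tmul_tensor (x : M) (y : N) :
    CoalgebraStruct.counit (R := K) (A := M ⊗[K] N) (x ⊗ₜ y) = counit x * counit (R := K) y := by
  simp [TensorProduct.counit_tmul, mul_comm]

lemma coassoc_left (u : M ⊗[K] M) (v : N ⊗[K] N) :
    TensorProduct.assoc K (M ⊗[K] N) (M ⊗[K] N) (M ⊗[K] N)
      ((CoalgebraStruct.comul (R := K) (A := M ⊗[K] N)).rTensor (M ⊗[K] N)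
        (TensorProduct.tensorTensorTensorComm K M M N N (u ⊗ₜ v))) =
    phi ((TensorProduct.assoc K M M M (comul.rTensor M u)) ⊗ₜ
      (TensorProduct.assoc K N N N (comul.rTensor N v))) := by
  induction u using TensorProduct.induction_on with
  | zero => simp
  | add u₁ u₂ h₁ h₂ => simp only [tmul_add, add_tmul, map_add, h₁, h₂]
  | tmul a b =>
    induction v using TensorProduct.induction_on with
    | zero => simp
    | add v₁ v₂ h₁ h₂ => simp only [tmul_add, add_tmul, map_add, h₁, h₂]
    | tmul c d =>
      simp only [tensorTensorTensorComm_tmul, LinearMap.rTensor_tmul,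
        comul_tmul_tensor]
      exact assoc_aux _ _ _ _

lemma coassoc_right (u : M ⊗[K] M) (v : N ⊗[K] N) :
    (CoalgebraStruct.comul (R := K) (A := M ⊗[K] N)).lTensor (M ⊗[K] N)
        (TensorProduct.tensorTensorTensorComm K M M N N (u ⊗ₜ v)) =
    phi ((comul.lTensor M u) ⊗ₜ (comul.lTensor N v)) := by
  induction u using TensorProduct.induction_on with
  | zero => simp
  | add u₁ u₂ h₁ h₂ => simp only [tmul_add, add_tmul, map_add, h₁, h₂]
  | tmul a b =>
    induction v using TensorProduct.induction_on with
    | zero => simp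
    | add v₁ v₂ h₁ h₂ => simp only [tmul_add, add_tmul, map_add, h₁, h₂]
    | tmul c d =>
      simp only [tensorTensorTensorComm_tmul, LinearMap.lTensor_tmul,
        comul_tmul_tensor]
      exact phi_aux _ _ _ _

/-- auxiliary map ψ -/
def psi : (K ⊗[K] M) ⊗[K] (K ⊗[K] N) →ₗ[K] K ⊗[K] (M ⊗[K] N) :=
  (TensorProduct.map (LinearMap.mul' K K) LinearMap.id) ∘ₗ
    (TensorProduct.tensorTensorTensorComm K K M K N).toLinearMap

@[simp] lemma psi_tmul (k l : K) (m : M) (n : N) :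
    psi ((k ⊗ₜ m) ⊗ₜ (l ⊗ₜ n)) = (k * l) ⊗ₜ (m ⊗ₜ[K] n) := by
  simp [psi]

/-- auxiliary map ψ' -/
def psi' : (M ⊗[K] K) ⊗[K] (N ⊗[K] K) →ₗ[K] (M ⊗[K] N) ⊗[K] K :=
  (TensorProduct.map LinearMap.id (LinearMap.mul' K K)) ∘ₗ
    (TensorProduct.tensorTensorTensorComm K M K N K).toLinearMap

@[simp] lemma psi'_tmul (k l : K) (m : M) (n : N) :
    psi' ((m ⊗ₜ k) ⊗ₜ (n ⊗ₜ l)) = (m ⊗ₜ[K] n) ⊗ₜ (k * l) := by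
  simp [psi']

lemma counit_left_aux (u : M ⊗[K] M) (v : N ⊗[K] N) :
    (CoalgebraStruct.counit (R := K) (A := M ⊗[K] N)).rTensor (M ⊗[K] N)
        (TensorProduct.tensorTensorTensorComm K M M N N (u ⊗ₜ v)) =
    psi ((counit.rTensor M u) ⊗ₜ (counit.rTensor N v)) := by
  induction u using TensorProduct.induction_on with
  | zero => simp
  | add u₁ u₂ h₁ h₂ => simp only [tmul_add, add_tmul, map_add, h₁, h₂]
  | tmul a b =>
    induction v using TensorProduct.induction_on with
    | zero => simp
    | add v₁ v₂ h₁ h₂ => simp only [tmul_add, add_tmul, map_add, h₁, h₂]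
    | tmul c d =>
      simp [counit_tmul_tensor, mul_comm]

lemma counit_right_aux (u : M ⊗[K] M) (v : N ⊗[K] N) :
    (CoalgebraStruct.counit (R := K) (A := M ⊗[K] N)).lTensor (M ⊗[K] N)
        (TensorProduct.tensorTensorTensorComm K M M N N (u ⊗ₜ v)) =
    psi' ((counit.lTensor M u) ⊗ₜ (counit.lTensor N v)) := by
  induction u using TensorProduct.induction_on with
  | zero => simp
  | add u₁ u₂ h₁ h₂ => simp only [tmul_add, add_tmul, map_add, h₁, h₂]
  | tmul a b =>
    induction v using TensorProduct.induction_on with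
    | zero => simp
    | add v₁ v₂ h₁ h₂ => simp only [tmul_add, add_tmul, map_add, h₁, h₂]
    | tmul c d =>
      simp [counit_tmul_tensor, mul_comm]

/-- The tensor product coalgebra, universe polymorphic. -/
instance tensorCoalgebra : Coalgebra K (M ⊗[K] N) where
  coassoc := by
    apply TensorProduct.ext'
    intro x y
    simp only [LinearMap.comp_apply, LinearEquiv.coe_coe, comul_tmul_tensor,
      coassoc_left, coassoc_right, Coalgebra.coassoc_apply]
  rTensor_counit_comp_comul := by
    apply TensorProduct.ext'
    intro x y
    simp only [LinearMap.comp_apply, comul_tmul_tensor, counit_left_aux,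
      Coalgebra.rTensor_counit_comul]
    simp
  lTensor_counit_comp_comul := by
    apply TensorProduct.ext'
    intro x y
    simp only [LinearMap.comp_apply, comul_tmul_tensor, counit_right_aux,
      Coalgebra.lTensor_counit_comul]
    simp

end TensorCoalg

section Conv
variable {K : Type*} [CommRing K]
variable {C : Type*} [AddCommGroup C] [Module K C] [Coalgebra K C]
variable {B : Type*} [Ring B] [Algebra K B]

/-- convolution product -/
def conv (f g : C →ₗ[K] B) : C →ₗ[K] B :=
  LinearMap.mul' K B ∘ₗ TensorProduct.map f g ∘ₗ Coalgebra.comul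

/-- convolution unit -/
def cunit : C →ₗ[K] B := Algebra.linearMap K B ∘ₗ Coalgebra.counit

lemma conv_apply (f g : C →ₗ[K] B) {c : C} {ι : Type*} (r : Coalgebra.Repr K c ι) :
    conv f g c = ∑ i ∈ r.index, f (r.left i) * g (r.right i) := by
  simp only [conv, LinearMap.comp_apply, ← r.eq, map_sum, TensorProduct.map_tmul,
    LinearMap.mul'_apply]

lemma sum_counit_smul_map {c : C} {ι : Type*} (r : Coalgebra.Repr K c ι) {M : Type*} [AddCommGroup M]
    [Module K M] (T : C →ₗ[K] M) :
    ∑ i ∈ r.index, Coalgebra.counit (R := K) (r.left i) • T (r.right i) = T c := by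
  have h := congrArg (TensorProduct.lid K M) (Coalgebra.sum_counit_tmul_map_eq T c (repr := r))
  simp only [map_sum, TensorProduct.lid_tmul, one_smul] at h
  exact h

lemma sum_smul_counit_map {c : C} {ι : Type*} (r : Coalgebra.Repr K c ι) {M : Type*} [AddCommGroup M]
    [Module K M] (T : C →ₗ[K] M) :
    ∑ i ∈ r.index, Coalgebra.counit (R := K) (r.right i) • T (r.left i) = T c := by
  have h := congrArg (TensorProduct.rid K M) (Coalgebra.sum_map_tmul_counit_eq T c (repr := r))
  simp only [map_sum, TensorProduct.rid_tmul, one_smul] at h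
  exact h

lemma conv_cunit_left (f : C →ₗ[K] B) : conv cunit f = f := by
  ext c
  rw [conv_apply _ _ (Coalgebra.Repr.arbitrary K c)]
  simp only [cunit, LinearMap.comp_apply, Algebra.linearMap_apply, ← Algebra.smul_def]
  exact sum_counit_smul_map _ f

lemma conv_cunit_right (f : C →ₗ[K] B) : conv f cunit = f := by
  ext c
  rw [conv_apply _ _ (Coalgebra.Repr.arbitrary K c)]
  simp only [cunit, LinearMap.comp_apply, Algebra.linearMap_apply]
  have : ∀ i ∈ (Coalgebra.Repr.arbitrary K c).index,
      f ((Coalgebra.Repr.arbitrary K c).left i) *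
        algebraMap K B (Coalgebra.counit ((Coalgebra.Repr.arbitrary K c).right i)) =
      Coalgebra.counit (R := K) ((Coalgebra.Repr.arbitrary K c).right i) •
        f ((Coalgebra.Repr.arbitrary K c).left i) := by
    intro i _
    rw [← Algebra.commutes, ← Algebra.smul_def]
  rw [Finset.sum_congr rfl this]
  exact sum_smul_counit_map _ f

lemma conv_assoc (f g h : C →ₗ[K] B) : conv (conv f g) h = conv f (conv g h) := by
  ext c
  set r := Coalgebra.Repr.arbitrary K c with hr
  have key := Coalgebra.sum_map_tmul_tmul_eq (R := K) f g h c (repr := r)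
    (a₁ := fun i => Coalgebra.Repr.arbitrary K (r.left i))
    (a₂ := fun i => Coalgebra.Repr.arbitrary K (r.right i))
  have key2 := congrArg (LinearMap.mul' K B ∘ₗ
    (TensorProduct.map LinearMap.id (LinearMap.mul' K B))) key
  simp only [map_sum, LinearMap.comp_apply, TensorProduct.map_tmul, LinearMap.id_apply,
    LinearMap.mul'_apply] at key2
  rw [conv_apply _ _ r, conv_apply _ _ r]
  have l1 : ∀ i ∈ r.index, conv f g (r.left i) * h (r.right i) =
      ∑ j ∈ (Coalgebra.Repr.arbitrary K (r.left i)).index,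
        f ((Coalgebra.Repr.arbitrary K (r.left i)).left j) *
          (g ((Coalgebra.Repr.arbitrary K (r.left i)).right j) * h (r.right i)) := by
    intro i _
    rw [conv_apply _ _ (Coalgebra.Repr.arbitrary K (r.left i)), Finset.sum_mul]
    simp only [mul_assoc]
  have l2 : ∀ i ∈ r.index, f (r.left i) * conv g h (r.right i) =
      ∑ j ∈ (Coalgebra.Repr.arbitrary K (r.right i)).index,
        f (r.left i) * (g ((Coalgebra.Repr.arbitrary K (r.right i)).left j) *
          h ((Coalgebra.Repr.arbitrary K (r.right i)).right j)) := by
    intro i _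
    rw [conv_apply _ _ (Coalgebra.Repr.arbitrary K (r.right i)), Finset.mul_sum]
  rw [Finset.sum_congr rfl l1, Finset.sum_congr rfl l2]
  exact key2.symm

lemma conv_comp {D : Type*} [AddCommGroup D] [Module K D] [Coalgebra K D]
    (f g : C →ₗ[K] B) (φ : D →ₗ[K] C)
    (hφ : Coalgebra.comul ∘ₗ φ = TensorProduct.map φ φ ∘ₗ Coalgebra.comul) :
    conv f g ∘ₗ φ = conv (f ∘ₗ φ) (g ∘ₗ φ) := by
  unfold conv
  rw [LinearMap.comp_assoc, LinearMap.comp_assoc, hφ, TensorProduct.map_comp]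
  simp only [LinearMap.comp_assoc]

lemma cunit_comp {D : Type*} [AddCommGroup D] [Module K D] [Coalgebra K D]
    (φ : D →ₗ[K] C) (hφ : Coalgebra.counit ∘ₗ φ = Coalgebra.counit (R := K)) :
    (cunit : C →ₗ[K] B) ∘ₗ φ = cunit := by
  unfold cunit
  rw [LinearMap.comp_assoc, hφ]

end Conv
section BialgLayer
open Coalgebra
variable {K A : Type*} [CommRing K] [Ring A] [Bialgebra K A]

/-- Repr of a tensor product element from Reprs of the factors. -/
def reprTmul {M N : Type*} [AddCommGroup M] [AddCommGroup N] [Module K M] [Module K N]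
    [Coalgebra K M] [Coalgebra K N] {x : M} {y : N} {ι κ : Type*}
    (rx : Coalgebra.Repr K x ι) (ry : Coalgebra.Repr K y κ) :
    Coalgebra.Repr K (x ⊗ₜ[K] y) (ι × κ) where
  index := rx.index ×ˢ ry.index
  left p := rx.left p.1 ⊗ₜ ry.left p.2
  right p := rx.right p.1 ⊗ₜ ry.right p.2
  eq := by
    rw [Finset.sum_product]
    show _ = CoalgebraStruct.comul (R := K) (x ⊗ₜ y)
    rw [comul_tmul_tensor, ← rx.eq, ← ry.eq]
    simp only [TensorProduct.sum_tmul, TensorProduct.tmul_sum, map_sum,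
      TensorProduct.tensorTensorTensorComm_tmul]
    rw [Finset.sum_comm]

/-- Repr of 1 in a bialgebra. -/
def reprOne : Coalgebra.Repr K (1 : A) ℕ where
  index := ({0} : Finset ℕ)
  left _ := 1
  right _ := 1
  eq := by
    rw [Finset.sum_singleton, show CoalgebraStruct.comul (R := K) (1 : A) = 1 from
      Bialgebra.comul_one, Algebra.TensorProduct.one_def]

lemma smul_tmul_smul' {M N : Type*} [AddCommGroup M] [AddCommGroup N] [Module K M]
    [Module K N] (a b : K) (u : M) (v : N) :
    (a • u) ⊗ₜ[K] (b • v) = (a * b) • (u ⊗ₜ[K] v) := by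
  simp only [TensorProduct.smul_tmul', TensorProduct.tmul_smul, smul_smul]
  ring_nf

lemma sum_counit_counit {a : A} {ι : Type*} (r : Coalgebra.Repr K a ι) :
    ∑ i ∈ r.index, Coalgebra.counit (R := K) (r.left i) * Coalgebra.counit (R := K) (r.right i)
      = Coalgebra.counit (R := K) a := by
  have := sum_counit_smul_map r (Coalgebra.counit (R := K) (A := A))
  simpa [smul_eq_mul] using this

/-- `x ⊗ w ↦ ε(x) • w`. -/
def pmap : A ⊗[K] (A ⊗[K] A) →ₗ[K] A ⊗[K] A :=
  (TensorProduct.lid K (A ⊗[K] A)).toLinearMap ∘ₗ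
    (Coalgebra.counit (R := K) (A := A)).rTensor (A ⊗[K] A)

@[simp] lemma pmap_tmul (x : A) (w : A ⊗[K] A) :
    pmap (x ⊗ₜ w) = Coalgebra.counit (R := K) x • w := by
  simp [pmap]

/-- `y ⊗ z ↦ ε(z) • y`. -/
def rmap : A ⊗[K] A →ₗ[K] A :=
  (TensorProduct.rid K A).toLinearMap ∘ₗ
    (Coalgebra.counit (R := K) (A := A)).lTensor A

@[simp] lemma rmap_tmul (y z : A) :
    rmap (y ⊗ₜ[K] z) = Coalgebra.counit (R := K) z • y := by
  simp [rmap]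

/-- `x ⊗ (y ⊗ z) ↦ ε(z) • (x ⊗ y)`. -/
def qmap : A ⊗[K] (A ⊗[K] A) →ₗ[K] A ⊗[K] A :=
  TensorProduct.map LinearMap.id rmap

@[simp] lemma qmap_tmul (x y z : A) :
    qmap (x ⊗ₜ (y ⊗ₜ z)) = Coalgebra.counit (R := K) z • (x ⊗ₜ[K] y) := by
  simp [qmap, rmap, TensorProduct.tmul_smul]

lemma pmap_counit_comp :
    Coalgebra.counit ∘ₗ pmap = Coalgebra.counit (R := K) (A := A ⊗[K] (A ⊗[K] A)) := by
  apply TensorProduct.ext'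
  intro x w
  simp only [LinearMap.comp_apply, pmap_tmul, map_smul, counit_tmul_tensor, smul_eq_mul]

lemma qmap_counit_comp :
    Coalgebra.counit ∘ₗ qmap = Coalgebra.counit (R := K) (A := A ⊗[K] (A ⊗[K] A)) := by
  apply TensorProduct.ext'
  intro x w
  induction w using TensorProduct.induction_on with
  | zero => simp
  | add u v hu hv => simp only [TensorProduct.tmul_add, map_add, hu, hv]
  | tmul y z =>
    simp only [LinearMap.comp_apply, qmap_tmul, map_smul, counit_tmul_tensor, smul_eq_mul]
    ring

lemma pmap_comul_comp :
    Coalgebra.comul ∘ₗ pmap =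
      TensorProduct.map pmap pmap ∘ₗ Coalgebra.comul (R := K) (A := A ⊗[K] (A ⊗[K] A)) := by
  apply TensorProduct.ext'
  intro x w
  have rx := Coalgebra.Repr.arbitrary K x
  have rw' := Coalgebra.Repr.arbitrary K w
  simp only [LinearMap.comp_apply, pmap_tmul, map_smul]
  rw [← (reprTmul rx rw').eq]
  simp only [map_sum, TensorProduct.map_tmul, reprTmul, pmap_tmul]
  rw [Finset.sum_product]
  have : ∀ i ∈ rx.index, ∑ j ∈ rw'.index,
      (Coalgebra.counit (R := K) (rx.left i) • rw'.left j) ⊗ₜ[K]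
        (Coalgebra.counit (R := K) (rx.right i) • rw'.right j) =
      (Coalgebra.counit (R := K) (rx.left i) * Coalgebra.counit (R := K) (rx.right i)) •
        Coalgebra.comul (R := K) w := by
    intro i _
    rw [← rw'.eq, Finset.smul_sum]
    apply Finset.sum_congr rfl
    intro j _
    rw [smul_tmul_smul']
  rw [Finset.sum_congr rfl this, ← Finset.sum_smul, sum_counit_counit]

lemma qmap_comul_comp :
    Coalgebra.comul ∘ₗ qmap =
      TensorProduct.map qmap qmap ∘ₗ Coalgebra.comul (R := K) (A := A ⊗[K] (A ⊗[K] A)) := by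
  apply TensorProduct.ext'
  intro x w
  induction w using TensorProduct.induction_on with
  | zero => simp only [TensorProduct.tmul_zero, map_zero]
  | add u v hu hv => simp only [TensorProduct.tmul_add, map_add, hu, hv]
  | tmul y z =>
    have rx := Coalgebra.Repr.arbitrary K x
    have ry := Coalgebra.Repr.arbitrary K y
    have rz := Coalgebra.Repr.arbitrary K z
    simp only [LinearMap.comp_apply, qmap_tmul, map_smul]
    rw [← (reprTmul rx (reprTmul ry rz)).eq, ← (reprTmul rx ry).eq]
    simp only [map_sum, TensorProduct.map_tmul, reprTmul, qmap_tmul, Finset.smul_sum]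
    rw [Finset.sum_product]
    rw [Finset.sum_product]
    apply Finset.sum_congr rfl
    intro i _
    rw [Finset.sum_product]
    apply Finset.sum_congr rfl
    intro j _
    have : ∀ k ∈ rz.index,
        (Coalgebra.counit (R := K) (rz.left k) • (rx.left i ⊗ₜ[K] ry.left j)) ⊗ₜ[K]
          (Coalgebra.counit (R := K) (rz.right k) • (rx.right i ⊗ₜ[K] ry.right j)) =
        (Coalgebra.counit (R := K) (rz.left k) * Coalgebra.counit (R := K) (rz.right k)) •
          ((rx.left i ⊗ₜ[K] ry.left j) ⊗ₜ[K] (rx.right i ⊗ₜ[K] ry.right j)) := by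
      intro k _
      rw [smul_tmul_smul']
    rw [Finset.sum_congr rfl this, ← Finset.sum_smul, sum_counit_counit]

end BialgLayer

section BialgLayer3
open Coalgebra
variable {K A : Type*} [CommRing K] [Ring A] [Bialgebra K A]

lemma mul_compat_aux1 (u v w : A ⊗[K] A) :
    TensorProduct.tensorTensorTensorComm K A A A A (u ⊗ₜ (v * w)) =
    TensorProduct.map (TensorProduct.map LinearMap.id (LinearMap.mul' K A))
        (TensorProduct.map LinearMap.id (LinearMap.mul' K A))
      (TensorProduct.tensorTensorTensorComm K A A (A ⊗[K] A) (A ⊗[K] A)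
        (u ⊗ₜ (TensorProduct.tensorTensorTensorComm K A A A A (v ⊗ₜ w)))) := by
  induction u using TensorProduct.induction_on with
  | zero =>
      simp only [TensorProduct.zero_tmul, TensorProduct.tmul_zero, map_zero, zero_mul,
        mul_zero]
  | add u₁ u₂ h₁ h₂ => simp only [TensorProduct.add_tmul, map_add, h₁, h₂]
  | tmul a b =>
    induction v using TensorProduct.induction_on with
    | zero =>
      simp only [TensorProduct.zero_tmul, TensorProduct.tmul_zero, map_zero, zero_mul,
        mul_zero]
    | add v₁ v₂ h₁ h₂ =>
      simp only [add_mul, TensorProduct.tmul_add, TensorProduct.add_tmul, map_add, h₁, h₂]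
    | tmul c d =>
      induction w using TensorProduct.induction_on with
      | zero =>
      simp only [TensorProduct.zero_tmul, TensorProduct.tmul_zero, map_zero, zero_mul,
        mul_zero]
      | add w₁ w₂ h₁ h₂ =>
        simp only [mul_add, TensorProduct.tmul_add, TensorProduct.add_tmul, map_add, h₁, h₂]
      | tmul e f => simp [Algebra.TensorProduct.tmul_mul_tmul]

lemma mul_compat_aux2 (u v w : A ⊗[K] A) :
    TensorProduct.tensorTensorTensorComm K A A A A ((u * v) ⊗ₜ w) =
    TensorProduct.map
        (TensorProduct.map (LinearMap.mul' K A) LinearMap.id ∘ₗ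
          (TensorProduct.assoc K A A A).symm.toLinearMap)
        (TensorProduct.map (LinearMap.mul' K A) LinearMap.id ∘ₗ
          (TensorProduct.assoc K A A A).symm.toLinearMap)
      (TensorProduct.tensorTensorTensorComm K A A (A ⊗[K] A) (A ⊗[K] A)
        (u ⊗ₜ (TensorProduct.tensorTensorTensorComm K A A A A (v ⊗ₜ w)))) := by
  induction u using TensorProduct.induction_on with
  | zero =>
      simp only [TensorProduct.zero_tmul, TensorProduct.tmul_zero, map_zero, zero_mul,
        mul_zero]
  | add u₁ u₂ h₁ h₂ =>
    simp only [add_mul, TensorProduct.tmul_add, TensorProduct.add_tmul, map_add, h₁, h₂]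
  | tmul a b =>
    induction v using TensorProduct.induction_on with
    | zero =>
      simp only [TensorProduct.zero_tmul, TensorProduct.tmul_zero, map_zero, zero_mul,
        mul_zero]
    | add v₁ v₂ h₁ h₂ =>
      simp only [mul_add, TensorProduct.tmul_add, TensorProduct.add_tmul, map_add, h₁, h₂]
    | tmul c d =>
      induction w using TensorProduct.induction_on with
      | zero =>
      simp only [TensorProduct.zero_tmul, TensorProduct.tmul_zero, map_zero, zero_mul,
        mul_zero]
      | add w₁ w₂ h₁ h₂ =>
        simp only [TensorProduct.tmul_add, TensorProduct.add_tmul, map_add, h₁, h₂]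
      | tmul e f => simp [Algebra.TensorProduct.tmul_mul_tmul]

lemma phi1_comul_comp :
    Coalgebra.comul ∘ₗ TensorProduct.map LinearMap.id (LinearMap.mul' K A) =
      TensorProduct.map (TensorProduct.map LinearMap.id (LinearMap.mul' K A))
          (TensorProduct.map LinearMap.id (LinearMap.mul' K A)) ∘ₗ
        Coalgebra.comul (R := K) (A := A ⊗[K] (A ⊗[K] A)) := by
  apply TensorProduct.ext'
  intro x w
  induction w using TensorProduct.induction_on with
  | zero => simp only [TensorProduct.tmul_zero, map_zero]
  | add u v hu hv => simp only [TensorProduct.tmul_add, map_add, hu, hv]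
  | tmul y z =>
    simp only [LinearMap.comp_apply, TensorProduct.map_tmul, LinearMap.id_apply,
      LinearMap.mul'_apply]
    rw [show CoalgebraStruct.comul (R := K) (x ⊗ₜ[K] (y * z)) =
      TensorProduct.tensorTensorTensorComm K A A A A (comul x ⊗ₜ comul (y * z)) from rfl]
    rw [show CoalgebraStruct.comul (R := K) (x ⊗ₜ[K] (y ⊗ₜ[K] z)) =
      TensorProduct.tensorTensorTensorComm K A A (A ⊗[K] A) (A ⊗[K] A)
        (comul x ⊗ₜ CoalgebraStruct.comul (y ⊗ₜ[K] z)) from rfl]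
    rw [show CoalgebraStruct.comul (R := K) (y ⊗ₜ[K] z) =
      TensorProduct.tensorTensorTensorComm K A A A A (comul y ⊗ₜ comul z) from rfl]
    rw [Bialgebra.comul_mul]
    exact mul_compat_aux1 _ _ _

lemma phi2_comul_comp :
    Coalgebra.comul ∘ₗ (TensorProduct.map (LinearMap.mul' K A) LinearMap.id ∘ₗ
        (TensorProduct.assoc K A A A).symm.toLinearMap) =
      TensorProduct.map
          (TensorProduct.map (LinearMap.mul' K A) LinearMap.id ∘ₗ
            (TensorProduct.assoc K A A A).symm.toLinearMap)
          (TensorProduct.map (LinearMap.mul' K A) LinearMap.id ∘ₗ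
            (TensorProduct.assoc K A A A).symm.toLinearMap) ∘ₗ
        Coalgebra.comul (R := K) (A := A ⊗[K] (A ⊗[K] A)) := by
  apply TensorProduct.ext'
  intro x w
  induction w using TensorProduct.induction_on with
  | zero => simp only [TensorProduct.tmul_zero, map_zero]
  | add u v hu hv => simp only [TensorProduct.tmul_add, map_add, hu, hv]
  | tmul y z =>
    simp only [LinearMap.comp_apply, LinearEquiv.coe_coe, TensorProduct.assoc_symm_tmul,
      TensorProduct.map_tmul, LinearMap.id_apply, LinearMap.mul'_apply]
    rw [show CoalgebraStruct.comul (R := K) ((x * y) ⊗ₜ[K] z) =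
      TensorProduct.tensorTensorTensorComm K A A A A (comul (x * y) ⊗ₜ comul z) from rfl]
    rw [show CoalgebraStruct.comul (R := K) (x ⊗ₜ[K] (y ⊗ₜ[K] z)) =
      TensorProduct.tensorTensorTensorComm K A A (A ⊗[K] A) (A ⊗[K] A)
        (comul x ⊗ₜ CoalgebraStruct.comul (y ⊗ₜ[K] z)) from rfl]
    rw [show CoalgebraStruct.comul (R := K) (y ⊗ₜ[K] z) =
      TensorProduct.tensorTensorTensorComm K A A A A (comul y ⊗ₜ comul z) from rfl]
    rw [Bialgebra.comul_mul]
    exact mul_compat_aux2 _ _ _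

end BialgLayer3

section Bridge
open Coalgebra
variable {K A : Type*} [CommRing K] [Ring A] [Bialgebra K A]

lemma lid_eq_mul' : (TensorProduct.lid K K).toLinearMap = LinearMap.mul' K K := by
  apply TensorProduct.ext'
  intro a b
  simp [smul_eq_mul]

lemma conv2_eq (f g : A ⊗[K] A →ₗ[K] K) : conv2 f g = conv f g := by
  unfold conv2 conv comul2
  rw [lid_eq_mul']
  rfl

lemma conv3_eq (f g : A ⊗[K] (A ⊗[K] A) →ₗ[K] K) : conv3 f g = conv f g := by
  unfold conv3 conv comul3 comul2
  rw [lid_eq_mul']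
  rfl

lemma conv2A_eq (f g : A ⊗[K] A →ₗ[K] A) : conv2A f g = conv f g := rfl

lemma counit2_eq : (counit2 : A ⊗[K] A →ₗ[K] K) = Coalgebra.counit := by
  unfold counit2
  rw [lid_eq_mul']
  exact TensorProduct.ext' fun a b => by simp [mul_comm]

lemma cunit_eq_counit {C : Type*} [AddCommGroup C] [Module K C] [Coalgebra K C] :
    (cunit : C →ₗ[K] K) = Coalgebra.counit := by
  unfold cunit
  ext c
  simp

lemma conv_counit_left {C : Type*} [AddCommGroup C] [Module K C] [Coalgebra K C]
    (f : C →ₗ[K] K) : conv Coalgebra.counit f = f := by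
  rw [← cunit_eq_counit, conv_cunit_left]

lemma conv_counit_right {C : Type*} [AddCommGroup C] [Module K C] [Coalgebra K C]
    (f : C →ₗ[K] K) : conv f Coalgebra.counit = f := by
  rw [← cunit_eq_counit, conv_cunit_right]

lemma Lrw (σ : A ⊗[K] A →ₗ[K] K) :
    (TensorProduct.lid K K).toLinearMap ∘ₗ TensorProduct.map Coalgebra.counit σ =
      σ ∘ₗ pmap := by
  apply TensorProduct.ext'
  intro x w
  simp [smul_eq_mul]

lemma Rrw (σ : A ⊗[K] A →ₗ[K] K) :
    ((TensorProduct.lid K K).toLinearMap ∘ₗ TensorProduct.map σ Coalgebra.counit) ∘ₗ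
      (TensorProduct.assoc K A A A).symm.toLinearMap = σ ∘ₗ qmap := by
  apply TensorProduct.ext'
  intro x w
  induction w using TensorProduct.induction_on with
  | zero => simp only [TensorProduct.tmul_zero, map_zero]
  | add u v hu hv => simp only [TensorProduct.tmul_add, map_add, hu, hv]
  | tmul y z =>
    simp only [LinearMap.comp_apply, LinearEquiv.coe_coe, TensorProduct.assoc_symm_tmul,
      TensorProduct.map_tmul, TensorProduct.lid_tmul, qmap_tmul, map_smul, smul_eq_mul]
    ring

lemma isCocycleEq_iff (m : A ⊗[K] A →ₗ[K] A) (σ : A ⊗[K] A →ₗ[K] K) :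
    IsCocycleEq m σ ↔
      conv (σ ∘ₗ pmap) (σ ∘ₗ TensorProduct.map LinearMap.id m) =
        conv (σ ∘ₗ qmap) (σ ∘ₗ (TensorProduct.map m LinearMap.id ∘ₗ
          (TensorProduct.assoc K A A A).symm.toLinearMap)) := by
  unfold IsCocycleEq
  rw [conv3_eq, conv3_eq, Lrw, Rrw, LinearMap.comp_assoc]

lemma L_conv (f g : A ⊗[K] A →ₗ[K] K) :
    conv f g ∘ₗ pmap = conv (f ∘ₗ pmap) (g ∘ₗ pmap) :=
  conv_comp f g pmap pmap_comul_comp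

lemma R_conv (f g : A ⊗[K] A →ₗ[K] K) :
    conv f g ∘ₗ qmap = conv (f ∘ₗ qmap) (g ∘ₗ qmap) :=
  conv_comp f g qmap qmap_comul_comp

lemma M1_conv (f g : A ⊗[K] A →ₗ[K] K) :
    conv f g ∘ₗ TensorProduct.map LinearMap.id (LinearMap.mul' K A) =
      conv (f ∘ₗ TensorProduct.map LinearMap.id (LinearMap.mul' K A))
        (g ∘ₗ TensorProduct.map LinearMap.id (LinearMap.mul' K A)) :=
  conv_comp f g _ phi1_comul_comp

lemma M2_conv (f g : A ⊗[K] A →ₗ[K] K) :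
    conv f g ∘ₗ (TensorProduct.map (LinearMap.mul' K A) LinearMap.id ∘ₗ
        (TensorProduct.assoc K A A A).symm.toLinearMap) =
      conv (f ∘ₗ (TensorProduct.map (LinearMap.mul' K A) LinearMap.id ∘ₗ
          (TensorProduct.assoc K A A A).symm.toLinearMap))
        (g ∘ₗ (TensorProduct.map (LinearMap.mul' K A) LinearMap.id ∘ₗ
          (TensorProduct.assoc K A A A).symm.toLinearMap)) :=
  conv_comp f g _ phi2_comul_comp

lemma conv_mid_left (f b : A ⊗[K] A →ₗ[K] K) (v : A ⊗[K] A →ₗ[K] A) :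
    f ∘ₗ TensorProduct.map LinearMap.id (conv (Algebra.linearMap K A ∘ₗ b) v) =
      conv (b ∘ₗ pmap) (f ∘ₗ TensorProduct.map LinearMap.id v) := by
  apply TensorProduct.ext'
  intro x w
  have rx := Coalgebra.Repr.arbitrary K x
  have rw' := Coalgebra.Repr.arbitrary K w
  have hL : (f ∘ₗ TensorProduct.map LinearMap.id (conv (Algebra.linearMap K A ∘ₗ b) v))
      (x ⊗ₜ w) = ∑ j ∈ rw'.index, b (rw'.left j) * f (x ⊗ₜ v (rw'.right j)) := by
    simp only [LinearMap.comp_apply, TensorProduct.map_tmul, LinearMap.id_apply]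
    rw [conv_apply _ _ rw']
    simp only [LinearMap.comp_apply, Algebra.linearMap_apply, ← Algebra.smul_def]
    rw [TensorProduct.tmul_sum, map_sum]
    simp only [TensorProduct.tmul_smul, map_smul, smul_eq_mul]
  rw [hL, conv_apply _ _ (reprTmul rx rw')]
  simp only [reprTmul, LinearMap.comp_apply, TensorProduct.map_tmul, LinearMap.id_apply,
    pmap_tmul, map_smul, smul_eq_mul]
  rw [Finset.sum_product, Finset.sum_comm]
  apply Finset.sum_congr rfl
  intro j _
  have key := sum_counit_smul_map rx
    (b (rw'.left j) • (f ∘ₗ (TensorProduct.mk K A A).flip (v (rw'.right j))))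
  simp only [LinearMap.smul_apply, LinearMap.comp_apply, LinearMap.flip_apply,
    TensorProduct.mk_apply, smul_eq_mul] at key
  rw [← key]
  apply Finset.sum_congr rfl
  intro i _
  ring

lemma conv_mid_right (f b : A ⊗[K] A →ₗ[K] K) (v : A ⊗[K] A →ₗ[K] A) :
    f ∘ₗ TensorProduct.map LinearMap.id (conv v (Algebra.linearMap K A ∘ₗ b)) =
      conv (f ∘ₗ TensorProduct.map LinearMap.id v) (b ∘ₗ pmap) := by
  apply TensorProduct.ext'
  intro x w
  have rx := Coalgebra.Repr.arbitrary K x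
  have rw' := Coalgebra.Repr.arbitrary K w
  have hL : (f ∘ₗ TensorProduct.map LinearMap.id (conv v (Algebra.linearMap K A ∘ₗ b)))
      (x ⊗ₜ w) = ∑ j ∈ rw'.index, b (rw'.right j) * f (x ⊗ₜ v (rw'.left j)) := by
    simp only [LinearMap.comp_apply, TensorProduct.map_tmul, LinearMap.id_apply]
    rw [conv_apply _ _ rw']
    have hc : ∀ j ∈ rw'.index, v (rw'.left j) * (Algebra.linearMap K A ∘ₗ b) (rw'.right j) =
        b (rw'.right j) • v (rw'.left j) := by
      intro j _
      simp only [LinearMap.comp_apply, Algebra.linearMap_apply]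
      rw [← Algebra.commutes, ← Algebra.smul_def]
    rw [Finset.sum_congr rfl hc, TensorProduct.tmul_sum, map_sum]
    simp only [TensorProduct.tmul_smul, map_smul, smul_eq_mul]
  rw [hL, conv_apply _ _ (reprTmul rx rw')]
  simp only [reprTmul, LinearMap.comp_apply, TensorProduct.map_tmul, LinearMap.id_apply,
    pmap_tmul, map_smul, smul_eq_mul]
  rw [Finset.sum_product, Finset.sum_comm]
  apply Finset.sum_congr rfl
  intro j _
  have key := sum_smul_counit_map rx
    (b (rw'.right j) • (f ∘ₗ (TensorProduct.mk K A A).flip (v (rw'.left j))))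
  simp only [LinearMap.smul_apply, LinearMap.comp_apply, LinearMap.flip_apply,
    TensorProduct.mk_apply, smul_eq_mul] at key
  rw [← key]
  apply Finset.sum_congr rfl
  intro i _
  ring

lemma conv_midq_left (f b : A ⊗[K] A →ₗ[K] K) (v : A ⊗[K] A →ₗ[K] A) :
    f ∘ₗ (TensorProduct.map (conv (Algebra.linearMap K A ∘ₗ b) v) LinearMap.id ∘ₗ
        (TensorProduct.assoc K A A A).symm.toLinearMap) =
      conv (b ∘ₗ qmap) (f ∘ₗ (TensorProduct.map v LinearMap.id ∘ₗ
        (TensorProduct.assoc K A A A).symm.toLinearMap)) := by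
  apply TensorProduct.ext'
  intro x w
  induction w using TensorProduct.induction_on with
  | zero => simp only [TensorProduct.tmul_zero, map_zero]
  | add u u' hu hu' => simp only [TensorProduct.tmul_add, map_add, hu, hu']
  | tmul y z =>
    have rx := Coalgebra.Repr.arbitrary K x
    have ry := Coalgebra.Repr.arbitrary K y
    have rz := Coalgebra.Repr.arbitrary K z
    have hL : (f ∘ₗ (TensorProduct.map (conv (Algebra.linearMap K A ∘ₗ b) v) LinearMap.id ∘ₗ
        (TensorProduct.assoc K A A A).symm.toLinearMap)) (x ⊗ₜ (y ⊗ₜ z)) =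
        ∑ i ∈ rx.index, ∑ j ∈ ry.index,
          b (rx.left i ⊗ₜ ry.left j) * f (v (rx.right i ⊗ₜ ry.right j) ⊗ₜ z) := by
      simp only [LinearMap.comp_apply, LinearEquiv.coe_coe, TensorProduct.assoc_symm_tmul,
        TensorProduct.map_tmul, LinearMap.id_apply]
      rw [conv_apply _ _ (reprTmul rx ry)]
      simp only [reprTmul, LinearMap.comp_apply, Algebra.linearMap_apply, ← Algebra.smul_def]
      rw [TensorProduct.sum_tmul, map_sum, Finset.sum_product]
      simp only [← TensorProduct.smul_tmul', map_smul, smul_eq_mul]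
    rw [hL, conv_apply _ _ (reprTmul rx (reprTmul ry rz))]
    simp only [reprTmul, LinearMap.comp_apply, LinearEquiv.coe_coe,
      TensorProduct.assoc_symm_tmul, TensorProduct.map_tmul, LinearMap.id_apply,
      qmap_tmul, map_smul, smul_eq_mul]
    rw [Finset.sum_product]
    apply Finset.sum_congr rfl
    intro i _
    rw [Finset.sum_product]
    apply Finset.sum_congr rfl
    intro j _
    have key := sum_counit_smul_map rz
      (b (rx.left i ⊗ₜ[K] ry.left j) •
        (f ∘ₗ TensorProduct.mk K A A (v (rx.right i ⊗ₜ ry.right j))))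
    simp only [LinearMap.smul_apply, LinearMap.comp_apply, TensorProduct.mk_apply,
      smul_eq_mul] at key
    rw [← key]
    apply Finset.sum_congr rfl
    intro k _
    ring

lemma conv_midq_right (f b : A ⊗[K] A →ₗ[K] K) (v : A ⊗[K] A →ₗ[K] A) :
    f ∘ₗ (TensorProduct.map (conv v (Algebra.linearMap K A ∘ₗ b)) LinearMap.id ∘ₗ
        (TensorProduct.assoc K A A A).symm.toLinearMap) =
      conv (f ∘ₗ (TensorProduct.map v LinearMap.id ∘ₗ
        (TensorProduct.assoc K A A A).symm.toLinearMap)) (b ∘ₗ qmap) := by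
  apply TensorProduct.ext'
  intro x w
  induction w using TensorProduct.induction_on with
  | zero => simp only [TensorProduct.tmul_zero, map_zero]
  | add u u' hu hu' => simp only [TensorProduct.tmul_add, map_add, hu, hu']
  | tmul y z =>
    have rx := Coalgebra.Repr.arbitrary K x
    have ry := Coalgebra.Repr.arbitrary K y
    have rz := Coalgebra.Repr.arbitrary K z
    have hL : (f ∘ₗ (TensorProduct.map (conv v (Algebra.linearMap K A ∘ₗ b)) LinearMap.id ∘ₗ
        (TensorProduct.assoc K A A A).symm.toLinearMap)) (x ⊗ₜ (y ⊗ₜ z)) =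
        ∑ i ∈ rx.index, ∑ j ∈ ry.index,
          b (rx.right i ⊗ₜ ry.right j) * f (v (rx.left i ⊗ₜ ry.left j) ⊗ₜ z) := by
      simp only [LinearMap.comp_apply, LinearEquiv.coe_coe, TensorProduct.assoc_symm_tmul,
        TensorProduct.map_tmul, LinearMap.id_apply]
      rw [conv_apply _ _ (reprTmul rx ry)]
      have hc : ∀ p ∈ (reprTmul rx ry).index,
          v ((reprTmul rx ry).left p) *
            (Algebra.linearMap K A ∘ₗ b) ((reprTmul rx ry).right p) =
          b ((reprTmul rx ry).right p) • v ((reprTmul rx ry).left p) := by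
        intro p _
        simp only [LinearMap.comp_apply, Algebra.linearMap_apply]
        rw [← Algebra.commutes, ← Algebra.smul_def]
      rw [Finset.sum_congr rfl hc]
      simp only [reprTmul]
      rw [TensorProduct.sum_tmul, map_sum, Finset.sum_product]
      simp only [← TensorProduct.smul_tmul', map_smul, smul_eq_mul]
    rw [hL, conv_apply _ _ (reprTmul rx (reprTmul ry rz))]
    simp only [reprTmul, LinearMap.comp_apply, LinearEquiv.coe_coe,
      TensorProduct.assoc_symm_tmul, TensorProduct.map_tmul, LinearMap.id_apply,
      qmap_tmul, map_smul, smul_eq_mul]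
    rw [Finset.sum_product]
    apply Finset.sum_congr rfl
    intro i _
    rw [Finset.sum_product]
    apply Finset.sum_congr rfl
    intro j _
    have key := sum_smul_counit_map rz
      (b (rx.right i ⊗ₜ[K] ry.right j) •
        (f ∘ₗ TensorProduct.mk K A A (v (rx.left i ⊗ₜ ry.left j))))
    simp only [LinearMap.smul_apply, LinearMap.comp_apply, TensorProduct.mk_apply,
      smul_eq_mul] at key
    rw [← key]
    apply Finset.sum_congr rfl
    intro k _
    ring

end Bridge

end ConvAux
end

open Coalgebra ConvAux


/-- if `β` is a unital 2-cocycle for `A` and `γ` is a unital 2-cocycle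
for the twisted bialgebra `A^β`, then `γ * β` is a unital 2-cocycle for `A`. -/
theorem conv_cocycle [CommRing K] [Ring A] [Bialgebra K A]
    (β βinv γ γinv : (A ⊗[K] A) →ₗ[K] K)
    (hβ₁ : conv2 β βinv = counit2) (hβ₂ : conv2 βinv β = counit2)
    (hβc : IsCocycleEq (LinearMap.mul' K A) β) (hβu : IsUnital β)
    (hγ₁ : conv2 γ γinv = counit2) (hγ₂ : conv2 γinv γ = counit2)
    (hγc : IsCocycleEq (mulTwist β βinv) γ) (hγu : IsUnital γ) :
    IsCocycleEq (LinearMap.mul' K A) (conv2 γ β) ∧ IsUnital (conv2 γ β) ∧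
      ∃ δ : (A ⊗[K] A) →ₗ[K] K,
        conv2 (conv2 γ β) δ = counit2 ∧ conv2 δ (conv2 γ β) = counit2 := by
  have hβ₁' : conv β βinv = (Coalgebra.counit : A ⊗[K] A →ₗ[K] K) := by
    rw [← conv2_eq, hβ₁, counit2_eq]
  have hβ₂' : conv βinv β = (Coalgebra.counit : A ⊗[K] A →ₗ[K] K) := by
    rw [← conv2_eq, hβ₂, counit2_eq]
  have hγ₁' : conv γ γinv = (Coalgebra.counit : A ⊗[K] A →ₗ[K] K) := by
    rw [← conv2_eq, hγ₁, counit2_eq]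
  have hγ₂' : conv γinv γ = (Coalgebra.counit : A ⊗[K] A →ₗ[K] K) := by
    rw [← conv2_eq, hγ₂, counit2_eq]
  refine ⟨?_, ?_, conv2 βinv γinv, ?_, ?_⟩
  · -- the cocycle identity
    have cancelL : conv (βinv ∘ₗ pmap) (β ∘ₗ pmap) =
        (Coalgebra.counit : A ⊗[K] (A ⊗[K] A) →ₗ[K] K) := by
      rw [← L_conv, hβ₂', pmap_counit_comp]
    have cancelR : conv (βinv ∘ₗ qmap) (β ∘ₗ qmap) =
        (Coalgebra.counit : A ⊗[K] (A ⊗[K] A) →ₗ[K] K) := by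
      rw [← R_conv, hβ₂', qmap_counit_comp]
    have hβc' := (isCocycleEq_iff _ β).1 hβc
    have hγc' := (isCocycleEq_iff _ γ).1 hγc
    rw [show mulTwist β βinv = conv (conv (Algebra.linearMap K A ∘ₗ β) (LinearMap.mul' K A))
        (Algebra.linearMap K A ∘ₗ βinv) from rfl] at hγc'
    rw [conv_mid_right γ βinv, conv_mid_left γ β, conv_midq_right γ βinv,
      conv_midq_left γ β] at hγc'
    rw [isCocycleEq_iff]
    simp only [conv2_eq]
    rw [M1_conv, M2_conv, L_conv, R_conv]
    have e1 : β ∘ₗ TensorProduct.map LinearMap.id (LinearMap.mul' K A)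
        = conv (βinv ∘ₗ pmap) (conv (β ∘ₗ qmap)
            (β ∘ₗ (TensorProduct.map (LinearMap.mul' K A) LinearMap.id ∘ₗ
              (TensorProduct.assoc K A A A).symm.toLinearMap))) := by
      rw [← hβc', ← conv_assoc, cancelL, conv_counit_left]
    calc conv (conv (γ ∘ₗ pmap) (β ∘ₗ pmap))
          (conv (γ ∘ₗ TensorProduct.map LinearMap.id (LinearMap.mul' K A))
            (β ∘ₗ TensorProduct.map LinearMap.id (LinearMap.mul' K A)))
        = conv (conv (γ ∘ₗ pmap) (conv (conv (β ∘ₗ pmap)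
              (γ ∘ₗ TensorProduct.map LinearMap.id (LinearMap.mul' K A))) (βinv ∘ₗ pmap)))
            (conv (β ∘ₗ qmap)
              (β ∘ₗ (TensorProduct.map (LinearMap.mul' K A) LinearMap.id ∘ₗ
                (TensorProduct.assoc K A A A).symm.toLinearMap))) := by
          rw [e1]; simp only [conv_assoc]
      _ = conv (conv (γ ∘ₗ qmap) (conv (conv (β ∘ₗ qmap)
              (γ ∘ₗ (TensorProduct.map (LinearMap.mul' K A) LinearMap.id ∘ₗ
                (TensorProduct.assoc K A A A).symm.toLinearMap))) (βinv ∘ₗ qmap)))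
            (conv (β ∘ₗ qmap)
              (β ∘ₗ (TensorProduct.map (LinearMap.mul' K A) LinearMap.id ∘ₗ
                (TensorProduct.assoc K A A A).symm.toLinearMap))) := by
          rw [hγc']
      _ = conv (γ ∘ₗ qmap) (conv (β ∘ₗ qmap)
            (conv (γ ∘ₗ (TensorProduct.map (LinearMap.mul' K A) LinearMap.id ∘ₗ
                (TensorProduct.assoc K A A A).symm.toLinearMap))
              (conv (conv (βinv ∘ₗ qmap) (β ∘ₗ qmap))
                (β ∘ₗ (TensorProduct.map (LinearMap.mul' K A) LinearMap.id ∘ₗ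
                  (TensorProduct.assoc K A A A).symm.toLinearMap))))) := by
          simp only [conv_assoc]
      _ = conv (conv (γ ∘ₗ qmap) (β ∘ₗ qmap))
            (conv (γ ∘ₗ (TensorProduct.map (LinearMap.mul' K A) LinearMap.id ∘ₗ
                (TensorProduct.assoc K A A A).symm.toLinearMap))
              (β ∘ₗ (TensorProduct.map (LinearMap.mul' K A) LinearMap.id ∘ₗ
                (TensorProduct.assoc K A A A).symm.toLinearMap))) := by
          rw [cancelR, conv_counit_left]; simp only [conv_assoc]
  · -- unitality
    intro x
    have rx := Coalgebra.Repr.arbitrary K x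
    constructor
    · rw [conv2_eq, conv_apply _ _ (reprTmul rx reprOne)]
      simp only [reprTmul, reprOne]
      rw [Finset.sum_product]
      simp only [Finset.sum_singleton]
      have h : ∀ i ∈ rx.index, γ (rx.left i ⊗ₜ[K] 1) * β (rx.right i ⊗ₜ[K] 1) =
          Coalgebra.counit (R := K) (rx.left i) * Coalgebra.counit (R := K) (rx.right i) := by
        intro i _
        rw [(hγu _).1, (hβu _).1]
      rw [Finset.sum_congr rfl h, sum_counit_counit]
    · rw [conv2_eq, conv_apply _ _ (reprTmul reprOne rx)]
      simp only [reprTmul, reprOne]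
      rw [Finset.sum_product]
      simp only [Finset.sum_singleton]
      have h : ∀ i ∈ rx.index, γ ((1 : A) ⊗ₜ[K] rx.left i) * β ((1 : A) ⊗ₜ[K] rx.right i) =
          Coalgebra.counit (R := K) (rx.left i) * Coalgebra.counit (R := K) (rx.right i) := by
        intro i _
        rw [(hγu _).2, (hβu _).2]
      rw [Finset.sum_congr rfl h, sum_counit_counit]
  · simp only [conv2_eq, counit2_eq]
    rw [conv_assoc, ← conv_assoc β βinv γinv, hβ₁', conv_counit_left, hγ₁']
  · simp only [conv2_eq, counit2_eq]
    rw [conv_assoc, ← conv_assoc γinv γ β, hγ₂', conv_counit_left, hβ₂']
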